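/- For every integer Q ≥ 2, the weights of the calendar time-varying treatment effect estimands in the immediate treatment effect estimator sum to one: Σ_{j=2}^{Q} w₂(Q,j) = Σ_{j=2}^{Q} 6(j−1)(Q+1−j)/(Q(Q+1)(Q−1)) = 1; hence the IT estimator is in expectation a weighted average (convex combination) of the calendar time-varying treatment effects ξ_2,…,ξ_Q. -/

import Mathlib

lemma IT_lin (n : ℕ) (hn : 2 ≤ n) :
    ∑ j ∈ Finset.Icc 2 n, ((j : ℝ) - 1) = (n : ℝ) * ((n : ℝ) - 1) / 2 := by
  induction n with
  | zero => omega
  | succ m ihm =>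
      rcases Nat.lt_or_ge m 2 with hm | hm
      · interval_cases m
        · omega
        · simp [Finset.Icc_self]
      · rw [Finset.sum_Icc_succ_top (by omega), ihm hm]
        push_cast; ring

lemma IT_aux (Q : ℕ) (hQ : 2 ≤ Q) :
    ∑ j ∈ Finset.Icc 2 Q, ((j : ℝ) - 1) * ((Q : ℝ) + 1 - (j : ℝ))
      = (Q : ℝ) * ((Q : ℝ) + 1) * ((Q : ℝ) - 1) / 6 := by
  induction Q with
  | zero => omega
  | succ n ih =>
      rcases Nat.lt_or_ge n 2 with hn | hn
      · interval_cases n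
        · omega
        · simp [Finset.Icc_self]; norm_num
      · rw [Finset.sum_Icc_succ_top (by omega)]
        have h1 : ∀ j ∈ Finset.Icc 2 n,
            ((j : ℝ) - 1) * ((↑(n + 1) : ℝ) + 1 - (j : ℝ))
              = ((j : ℝ) - 1) * ((n : ℝ) + 1 - (j : ℝ)) + ((j : ℝ) - 1) := by
          intro j hj; push_cast; ring
        rw [Finset.sum_congr rfl h1, Finset.sum_add_distrib, ih hn, IT_lin n hn]
        push_cast; ring

theorem IT_calendar_weights_sum_to_one (Q : ℕ) (hQ : 2 ≤ Q) :
    ∑ j ∈ Finset.Icc 2 Q,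
        6 * ((j : ℝ) - 1) * ((Q : ℝ) + 1 - (j : ℝ)) /
          ((Q : ℝ) * ((Q : ℝ) + 1) * ((Q : ℝ) - 1)) = 1 := by
  have hQ' : (2 : ℝ) ≤ (Q : ℝ) := by exact_mod_cast hQ
  have hne : (Q : ℝ) * ((Q : ℝ) + 1) * ((Q : ℝ) - 1) ≠ 0 := by
    have h1 : (0:ℝ) < (Q:ℝ) := by linarith
    have h2 : (0:ℝ) < (Q:ℝ) + 1 := by linarith
    have h3 : (0:ℝ) < (Q:ℝ) - 1 := by linarith
    positivity
  have haux := IT_aux Q hQ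
  calc ∑ j ∈ Finset.Icc 2 Q,
        6 * ((j : ℝ) - 1) * ((Q : ℝ) + 1 - (j : ℝ)) /
          ((Q : ℝ) * ((Q : ℝ) + 1) * ((Q : ℝ) - 1))
      = (∑ j ∈ Finset.Icc 2 Q, 6 * (((j : ℝ) - 1) * ((Q : ℝ) + 1 - (j : ℝ)))) /
          ((Q : ℝ) * ((Q : ℝ) + 1) * ((Q : ℝ) - 1)) := by
        rw [Finset.sum_div]; exact Finset.sum_congr rfl fun j _ => by ring
    _ = 1 := by
        rw [← Finset.mul_sum, haux]
        field_simp
        exact div_self (by intro h; linarith)
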